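/- Let σ > 0 and β > 0, and let μ be the Gaussian measure on ℝ with mean 0 and variance σ², whose density is φ_σ(w) = exp(−w²/(2σ²))/(σ√(2π)). Then φ_σ(−β) ≤ Ĉ · μ((−∞, −β]), where Ĉ := ((√(4 + β²/σ²) + β/σ)/(√(2 + β²/σ²) + β/σ)) · (β/σ² + (β/√(2 + β²/σ²) + σ)/(σ²·√(2 + β²/σ²) + βσ)). (The sharper bound Ĉ_{2,1} of Remark 4.6 on the local Lipschitz constant of the Gaussian CDF.) -/

import Mathlib

open MeasureTheory ProbabilityTheory Set

open Filter Topology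

noncomputable def gdens (σ x : ℝ) : ℝ := Real.exp (-x ^ 2 / (2 * σ ^ 2)) / (σ * Real.sqrt (2 * Real.pi))

lemma gdens_eq (σ : ℝ) (hσ : 0 < σ) (x : ℝ) :
    gdens σ x = gaussianPDFReal 0 ⟨σ ^ 2, sq_nonneg σ⟩ x := by
  simp only [gdens, gaussianPDFReal, NNReal.coe_mk, sub_zero]
  have h : Real.sqrt (2 * Real.pi * σ ^ 2) = Real.sqrt (2 * Real.pi) * σ := by
    rw [Real.sqrt_mul (by positivity : (0:ℝ) ≤ 2 * Real.pi) (σ ^ 2), Real.sqrt_sq hσ.le]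
  change _ = (Real.sqrt (2 * Real.pi * σ ^ 2))⁻¹ * Real.exp (-x ^ 2 / (2 * σ ^ 2))
  rw [h, div_eq_inv_mul, mul_comm (Real.sqrt (2 * Real.pi)) σ]

lemma gdens_pos (σ : ℝ) (hσ : 0 < σ) (x : ℝ) : 0 < gdens σ x := by
  unfold gdens; positivity

lemma gdens_even (σ x : ℝ) : gdens σ (-x) = gdens σ x := by simp [gdens]

lemma continuous_gdens (σ : ℝ) : Continuous (gdens σ) := by
  unfold gdens; fun_prop

lemma integrable_gdens (σ : ℝ) (hσ : 0 < σ) : Integrable (gdens σ) := by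
  have := integrable_gaussianPDFReal 0 (⟨σ ^ 2, sq_nonneg σ⟩ : NNReal)
  exact this.congr (by filter_upwards with x using (gdens_eq σ hσ x).symm)

lemma hasDerivAt_gdens (σ : ℝ) (hσ : 0 < σ) (x : ℝ) :
    HasDerivAt (gdens σ) (-(x / σ ^ 2) * gdens σ x) x := by
  have h0 : HasDerivAt (fun x : ℝ => -x ^ 2 / (2 * σ ^ 2)) (-(2 * x ^ 1) / (2 * σ ^ 2)) x :=
    ((hasDerivAt_pow 2 x).neg).div_const _
  have h1 := (h0.exp).div_const (σ * Real.sqrt (2 * Real.pi))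
  refine h1.congr_deriv ?_
  unfold gdens
  field_simp

noncomputable def gtail (σ b : ℝ) : ℝ := ∫ x in Iic (-b), gdens σ x

lemma gtail_eq (σ : ℝ) (hσ : 0 < σ) (b : ℝ) :
    gtail σ b = ((gaussianReal 0 ⟨σ ^ 2, sq_nonneg σ⟩) (Iic (-b))).toReal := by
  have hv : (⟨σ ^ 2, sq_nonneg σ⟩ : NNReal) ≠ 0 := by
    exact fun h => pow_ne_zero 2 hσ.ne' (congrArg NNReal.toReal h)
  rw [gaussianReal_apply_eq_integral 0 hv, ENNReal.toReal_ofReal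
    (integral_nonneg fun x => gaussianPDFReal_nonneg 0 (⟨σ ^ 2, sq_nonneg σ⟩ : NNReal) x)]
  unfold gtail
  refine setIntegral_congr_fun measurableSet_Iic fun x _ => gdens_eq σ hσ x

lemma hasDerivAt_gtail (σ : ℝ) (hσ : 0 < σ) (b : ℝ) :
    HasDerivAt (gtail σ) (-gdens σ b) b := by
  have hint : Integrable (gdens σ) := integrable_gdens σ hσ
  have key : ∀ u : ℝ, gtail σ u = (∫ x in Iic (0:ℝ), gdens σ x) + ∫ x in (0:ℝ)..(-u), gdens σ x := by
    intro u
    rw [← intervalIntegral.integral_Iic_sub_Iic hint.integrableOn hint.integrableOn]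
    unfold gtail; ring
  have hF : HasDerivAt (fun v : ℝ => ∫ x in (0:ℝ)..v, gdens σ x) (gdens σ (-b)) (-b) :=
    intervalIntegral.integral_hasDerivAt_right (hint.intervalIntegrable)
      ((continuous_gdens σ).stronglyMeasurable.stronglyMeasurableAtFilter)
      (continuous_gdens σ).continuousAt
  have hneg : HasDerivAt (fun u : ℝ => -u) (-1) b := (hasDerivAt_id b).neg
  have := (hF.comp b hneg)
  have h2 : HasDerivAt (fun u : ℝ => (∫ x in Iic (0:ℝ), gdens σ x) + ∫ x in (0:ℝ)..(-u), gdens σ x)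
      (gdens σ (-b) * -1) b := (this).const_add _
  rw [funext key]
  convert h2 using 1
  rw [gdens_even]; ring

lemma hasDerivAt_gsq (σ b : ℝ) (hσ : 0 < σ) :
    HasDerivAt (fun x : ℝ => Real.sqrt (x ^ 2 + 4 * σ ^ 2))
      (b / Real.sqrt (b ^ 2 + 4 * σ ^ 2)) b := by
  have hpos : 0 < b ^ 2 + 4 * σ ^ 2 := by positivity
  have hin : HasDerivAt (fun x : ℝ => x ^ 2 + 4 * σ ^ 2) (2 * b ^ 1) b :=
    (hasDerivAt_pow 2 b).add_const _
  have := (Real.hasDerivAt_sqrt hpos.ne').comp b hin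
  refine this.congr_deriv ?_
  have hne : Real.sqrt (b ^ 2 + 4 * σ ^ 2) ≠ 0 := (Real.sqrt_pos.2 hpos).ne'
  rw [pow_one]
  field_simp

noncomputable def gfun (σ b : ℝ) : ℝ :=
  gtail σ b - 2 * σ ^ 2 * gdens σ b / (b + Real.sqrt (b ^ 2 + 4 * σ ^ 2))

lemma sqrt_gt (σ b : ℝ) (hσ : 0 < σ) : -b < Real.sqrt (b ^ 2 + 4 * σ ^ 2) := by
  have h1 : |b| < Real.sqrt (b ^ 2 + 4 * σ ^ 2) := by
    rw [← Real.sqrt_sq_eq_abs]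
    exact Real.sqrt_lt_sqrt (sq_nonneg b) (by nlinarith)
  calc -b ≤ |b| := neg_le_abs b
    _ < _ := h1

lemma sqrt_ge_self (σ b : ℝ) (hσ : 0 < σ) : b ≤ Real.sqrt (b ^ 2 + 4 * σ ^ 2) :=
  le_trans (le_abs_self b) (by
    rw [← Real.sqrt_sq_eq_abs]
    exact Real.sqrt_le_sqrt (by nlinarith))

lemma hasDerivAt_gfun (σ b : ℝ) (hσ : 0 < σ) :
    HasDerivAt (gfun σ)
      (-gdens σ b -
        (2 * σ ^ 2 * (-(b / σ ^ 2) * gdens σ b) * (b + Real.sqrt (b ^ 2 + 4 * σ ^ 2)) -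
            2 * σ ^ 2 * gdens σ b * (1 + b / Real.sqrt (b ^ 2 + 4 * σ ^ 2))) /
          (b + Real.sqrt (b ^ 2 + 4 * σ ^ 2)) ^ 2) b := by
  have hd : (0:ℝ) < b + Real.sqrt (b ^ 2 + 4 * σ ^ 2) := by
    have := sqrt_gt σ b hσ; linarith
  have hden : HasDerivAt (fun x : ℝ => x + Real.sqrt (x ^ 2 + 4 * σ ^ 2))
      (1 + b / Real.sqrt (b ^ 2 + 4 * σ ^ 2)) b :=
    (hasDerivAt_id b).add (hasDerivAt_gsq σ b hσ)
  have hnum : HasDerivAt (fun x : ℝ => 2 * σ ^ 2 * gdens σ x)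
      (2 * σ ^ 2 * (-(b / σ ^ 2) * gdens σ b)) b := (hasDerivAt_gdens σ hσ b).const_mul _
  exact (hasDerivAt_gtail σ hσ b).sub (hnum.div hden hd.ne')

lemma deriv_gfun_nonpos (σ b : ℝ) (hσ : 0 < σ) : deriv (gfun σ) b ≤ 0 := by
  rw [(hasDerivAt_gfun σ b hσ).deriv]
  set s := Real.sqrt (b ^ 2 + 4 * σ ^ 2) with hsdef
  set f := gdens σ b with hfdef
  have hspos : 0 < s := Real.sqrt_pos.2 (by positivity)
  have hd : (0:ℝ) < b + s := by have := sqrt_gt σ b hσ; linarith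
  have hbs : b ≤ s := sqrt_ge_self σ b hσ
  have hs2 : s ^ 2 = b ^ 2 + 4 * σ ^ 2 := Real.sq_sqrt (by positivity)
  have hf : 0 < f := gdens_pos σ hσ b
  rw [sub_nonpos, neg_le, ← neg_div, div_le_iff₀ (by positivity : (0:ℝ) < (b + s) ^ 2)]
  have e1 : 2 * σ ^ 2 * (-(b / σ ^ 2) * f) = -(2 * b * f) := by
    field_simp
  rw [e1]
  have hq1 : b / s ≤ 1 := (div_le_one hspos).2 hbs
  have e : f * (b + s) ^ 2 = 2 * b * f * (b + s) + 4 * σ ^ 2 * f := by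
    linear_combination f * hs2
  have h3 : 2 * σ ^ 2 * f * (b / s) ≤ 2 * σ ^ 2 * f * 1 :=
    mul_le_mul_of_nonneg_left hq1 (by positivity)
  nlinarith [e, h3]

lemma antitone_gfun (σ : ℝ) (hσ : 0 < σ) : Antitone (gfun σ) := by
  refine antitone_of_deriv_nonpos (fun b => (hasDerivAt_gfun σ b hσ).differentiableAt) ?_
  exact fun b => deriv_gfun_nonpos σ b hσ

lemma tendsto_gtail (σ : ℝ) (hσ : 0 < σ) : Tendsto (gtail σ) atTop (𝓝 0) := by
  have hv : (⟨σ ^ 2, sq_nonneg σ⟩ : NNReal) ≠ 0 :=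
    fun h => pow_ne_zero 2 hσ.ne' (congrArg NNReal.toReal h)
  set μ := gaussianReal 0 ⟨σ ^ 2, sq_nonneg σ⟩ with hμ
  haveI : IsFiniteMeasure μ := by
    rw [hμ]; exact (show ∀ v : NNReal, IsFiniteMeasure (gaussianReal 0 v) from fun v => inferInstance) _
  have hmeas : Tendsto (fun b : ℝ => μ (Iic (-b))) atTop (𝓝 (μ (⋂ b : ℝ, Iic (-b)))) := by
    exact tendsto_measure_iInter_atTop (fun b => measurableSet_Iic.nullMeasurableSet)
      (fun a b hab => Iic_subset_Iic.2 (by linarith)) ⟨0, measure_ne_top μ _⟩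
  have hempty : (⋂ b : ℝ, Iic (-b)) = (∅ : Set ℝ) := by
    ext x
    simp only [mem_iInter, mem_Iic, mem_empty_iff_false, iff_false, not_forall, not_le]
    exact ⟨-x + 1, by linarith⟩
  rw [hempty] at hmeas
  simp only [measure_empty] at hmeas
  have := (ENNReal.tendsto_toReal (by simp : (0:ENNReal) ≠ ⊤)).comp hmeas
  simp only [ENNReal.toReal_zero] at this
  refine this.congr fun b => ?_
  exact (gtail_eq σ hσ b).symm

lemma tendsto_gpart (σ : ℝ) (hσ : 0 < σ) :
    Tendsto (fun b => 2 * σ ^ 2 * gdens σ b / (b + Real.sqrt (b ^ 2 + 4 * σ ^ 2))) atTop (𝓝 0) := by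
  have hC : ∀ b : ℝ, gdens σ b ≤ (σ * Real.sqrt (2 * Real.pi))⁻¹ := by
    intro b
    rw [gdens, div_eq_mul_inv]
    have h1 : Real.exp (-b ^ 2 / (2 * σ ^ 2)) ≤ 1 := by
      rw [Real.exp_le_one_iff]
      have : (0:ℝ) ≤ b ^ 2 / (2 * σ ^ 2) := by positivity
      rw [neg_div]; linarith
    nlinarith [inv_pos.2 (by positivity : (0:ℝ) < σ * Real.sqrt (2 * Real.pi)), h1]
  have hb : Tendsto (fun b : ℝ => 2 * σ ^ 2 * (σ * Real.sqrt (2 * Real.pi))⁻¹ / b) atTop (𝓝 0) :=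
    Tendsto.div_atTop tendsto_const_nhds tendsto_id
  refine tendsto_of_tendsto_of_tendsto_of_le_of_le' tendsto_const_nhds hb ?_ ?_
  · filter_upwards [eventually_gt_atTop (0:ℝ)] with b hb0
    refine div_nonneg (mul_nonneg (by positivity) (gdens_pos σ hσ b).le) ?_
    have : (0:ℝ) ≤ Real.sqrt (b ^ 2 + 4 * σ ^ 2) := Real.sqrt_nonneg _
    linarith
  · filter_upwards [eventually_gt_atTop (0:ℝ)] with b hb0
    have hs : b ≤ b + Real.sqrt (b ^ 2 + 4 * σ ^ 2) := by
      have : (0:ℝ) ≤ Real.sqrt (b ^ 2 + 4 * σ ^ 2) := Real.sqrt_nonneg _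
      linarith
    have h2 : 2 * σ ^ 2 * gdens σ b ≤ 2 * σ ^ 2 * (σ * Real.sqrt (2 * Real.pi))⁻¹ :=
      mul_le_mul_of_nonneg_left (hC b) (by positivity)
    exact div_le_div₀ (by positivity) (hC b |>.trans (le_refl _) |> fun h => mul_le_mul_of_nonneg_left h (by positivity : (0:ℝ) ≤ 2 * σ ^ 2)) hb0 hs

lemma gfun_nonneg (σ b : ℝ) (hσ : 0 < σ) : 0 ≤ gfun σ b := by
  have hlim : Tendsto (gfun σ) atTop (𝓝 0) := by
    have := (tendsto_gtail σ hσ).sub (tendsto_gpart σ hσ)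
    rw [sub_zero] at this
    exact this
  exact (antitone_gfun σ hσ).le_of_tendsto hlim b

/-- Key inequality: `2σ² φ_σ(β) ≤ (β + √(β² + 4σ²)) μ(Iic (-β))`. -/
lemma key_ineq (σ b : ℝ) (hσ : 0 < σ) :
    2 * σ ^ 2 * gdens σ b ≤ (b + Real.sqrt (b ^ 2 + 4 * σ ^ 2)) * gtail σ b := by
  have h := gfun_nonneg σ b hσ
  have hd : (0:ℝ) < b + Real.sqrt (b ^ 2 + 4 * σ ^ 2) := by
    have := sqrt_gt σ b hσ; linarith
  rw [gfun, sub_nonneg, div_le_iff₀ hd] at h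
  linarith [h]

lemma alg_ineq (σ β : ℝ) (hσ : 0 < σ) (hβ : 0 < β) :
    (β + Real.sqrt (β ^ 2 + 4 * σ ^ 2)) / (2 * σ ^ 2) ≤
      ((Real.sqrt (4 + β ^ 2 / σ ^ 2) + β / σ) / (Real.sqrt (2 + β ^ 2 / σ ^ 2) + β / σ)) *
        (β / σ ^ 2 +
          (β / Real.sqrt (2 + β ^ 2 / σ ^ 2) + σ) /
            (σ ^ 2 * Real.sqrt (2 + β ^ 2 / σ ^ 2) + β * σ)) := by
  set A := Real.sqrt (β ^ 2 + 4 * σ ^ 2) with hAdef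
  set B := Real.sqrt (β ^ 2 + 2 * σ ^ 2) with hBdef
  have hA : 0 < A := Real.sqrt_pos.2 (by positivity)
  have hB : 0 < B := Real.sqrt_pos.2 (by positivity)
  have hB2 : B ^ 2 = β ^ 2 + 2 * σ ^ 2 := Real.sq_sqrt (by positivity)
  have hβB : β ≤ B := by
    rw [hBdef]
    calc β = Real.sqrt (β ^ 2) := (Real.sqrt_sq hβ.le).symm
    _ ≤ _ := Real.sqrt_le_sqrt (by nlinarith)
  have eA : Real.sqrt (4 + β ^ 2 / σ ^ 2) = A / σ := by
    rw [eq_div_iff hσ.ne', hAdef, ← Real.sqrt_sq hσ.le, ← Real.sqrt_mul (by positivity)]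
    congr 1
    field_simp
    linear_combination (-(4 * Real.sqrt (σ ^ 2) ^ 2 + β ^ 2)) * Real.sq_sqrt (sq_nonneg σ)
  have eB : Real.sqrt (2 + β ^ 2 / σ ^ 2) = B / σ := by
    rw [eq_div_iff hσ.ne', hBdef, ← Real.sqrt_sq hσ.le, ← Real.sqrt_mul (by positivity)]
    congr 1
    field_simp
    linear_combination (-(2 * Real.sqrt (σ ^ 2) ^ 2 + β ^ 2)) * Real.sq_sqrt (sq_nonneg σ)
  rw [eA, eB]
  have e1 : (A / σ + β / σ) / (B / σ + β / σ) = (A + β) / (B + β) := by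
    rw [← add_div, ← add_div, div_div_div_cancel_right₀ hσ.ne']
  have e2 : (β / (B / σ) + σ) / (σ ^ 2 * (B / σ) + β * σ) = 1 / B := by
    rw [div_eq_div_iff (by positivity) hB.ne']
    field_simp
    ring
  rw [e1, e2]
  rw [div_add_div _ _ (by positivity : (σ:ℝ) ^ 2 ≠ 0) hB.ne', div_mul_div_comm,
    div_le_div_iff₀ (by positivity) (by positivity)]
  have hprod : 0 ≤ (β + A) * σ ^ 2 * (β * (B - β)) := by
    have h1 : (0:ℝ) ≤ B - β := by linarith
    positivity
  have expand : (A + β) * (β * B + σ ^ 2 * 1) * (2 * σ ^ 2) - (β + A) * ((B + β) * (σ ^ 2 * B)) =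
      (β + A) * σ ^ 2 * (β * (B - β)) := by
    linear_combination (-(β + A) * σ ^ 2) * hB2
  linarith [expand, hprod]


/-- Remark 4.6: the sharper bound `Ĉ_{2,1}` on the local Lipschitz constant of the CDF
of the Gaussian measure with mean `0` and variance `σ²`: the density at `-β` is bounded
by `Ĉ` times the probability of failure `μ((-∞, -β])`. -/
theorem sharper_lipschitz_constant_bound (σ β : ℝ) (hσ : 0 < σ) (hβ : 0 < β) :
    Real.exp (-β ^ 2 / (2 * σ ^ 2)) / (σ * Real.sqrt (2 * Real.pi)) ≤
      ((Real.sqrt (4 + β ^ 2 / σ ^ 2) + β / σ) / (Real.sqrt (2 + β ^ 2 / σ ^ 2) + β / σ)) *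
        (β / σ ^ 2 +
          (β / Real.sqrt (2 + β ^ 2 / σ ^ 2) + σ) /
            (σ ^ 2 * Real.sqrt (2 + β ^ 2 / σ ^ 2) + β * σ)) *
        ((gaussianReal 0 ⟨σ ^ 2, sq_nonneg σ⟩) (Set.Iic (-β))).toReal := by
  have hmeas : ((gaussianReal 0 ⟨σ ^ 2, sq_nonneg σ⟩) (Set.Iic (-β))).toReal = gtail σ β :=
    (gtail_eq σ hσ β).symm
  rw [hmeas]
  have hLHS : Real.exp (-β ^ 2 / (2 * σ ^ 2)) / (σ * Real.sqrt (2 * Real.pi)) = gdens σ β := rfl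
  rw [hLHS]
  have htail : 0 ≤ gtail σ β := by
    rw [gtail_eq σ hσ β]; exact ENNReal.toReal_nonneg
  have hkey := key_ineq σ β hσ
  have h1 : gdens σ β ≤ (β + Real.sqrt (β ^ 2 + 4 * σ ^ 2)) / (2 * σ ^ 2) * gtail σ β := by
    rw [div_mul_eq_mul_div, le_div_iff₀ (by positivity : (0:ℝ) < 2 * σ ^ 2)]
    linarith [hkey]
  refine h1.trans ?_
  exact mul_le_mul_of_nonneg_right (alg_ineq σ β hσ hβ) htail
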